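/- Let m, n > 0 be real and define the Darijani–Naghdabadi exponential scale function E : (0,∞) → ℝ by E(λ) := (e^{m(λ−1)} − e^{n(λ^{−1}−1)})/(m + n). Then: (i) E(1) = 0; (ii) E'(1) = 1; (iii) E'(λ) > 0 for all λ > 0; (iv) E(λ) → +∞ as λ → ∞ and E(λ) → −∞ as λ → 0⁺ (coercivity). -/

import Mathlib

open Filter Topology

/-- The Darijani–Naghdabadi exponential scale function
`E(λ) = (e^{m(λ−1)} − e^{n(λ^{−1}−1)})/(m+n)`. -/
noncomputable def DNscale (m n : ℝ) (x : ℝ) : ℝ :=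
  (Real.exp (m * (x - 1)) - Real.exp (n * (x⁻¹ - 1))) / (m + n)

lemma DNscale_hasDerivAt (m n : ℝ) {x : ℝ} (hx : x ≠ 0) :
    HasDerivAt (DNscale m n)
      ((m * Real.exp (m * (x - 1)) + n * (x ^ 2)⁻¹ * Real.exp (n * (x⁻¹ - 1))) / (m + n)) x := by
  have h1 : HasDerivAt (fun x : ℝ => m * (x - 1)) m x := by
    simpa using ((hasDerivAt_id x).sub_const 1).const_mul m
  have h2 : HasDerivAt (fun x : ℝ => n * (x⁻¹ - 1)) (n * (-(x ^ 2)⁻¹)) x :=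
    ((hasDerivAt_inv hx).sub_const 1).const_mul n
  have h := ((h1.exp).sub (h2.exp)).div_const (m + n)
  refine h.congr_deriv ?_
  ring

/-- For `m, n > 0`, the Darijani–Naghdabadi exponential scale function
vanishes at `1` with derivative `1` there, is differentiable with everywhere positive
derivative on `(0,∞)`, and is coercive. -/
theorem DNscale_properties (m n : ℝ) (hm : 0 < m) (hn : 0 < n) :
    DNscale m n 1 = 0 ∧
    deriv (DNscale m n) 1 = 1 ∧
    (∀ x : ℝ, 0 < x → DifferentiableAt ℝ (DNscale m n) x) ∧
    (∀ x : ℝ, 0 < x → 0 < deriv (DNscale m n) x) ∧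
    Tendsto (DNscale m n) atTop atTop ∧
    Tendsto (DNscale m n) (𝓝[>] (0 : ℝ)) atBot := by
  have hmn : 0 < m + n := by linarith
  refine ⟨by simp [DNscale], ?_, ?_, ?_, ?_, ?_⟩
  · have h := (DNscale_hasDerivAt m n (one_ne_zero)).deriv
    rw [h]
    field_simp
    simp
  · intro x hx
    exact (DNscale_hasDerivAt m n hx.ne').differentiableAt
  · intro x hx
    rw [(DNscale_hasDerivAt m n hx.ne').deriv]
    have : 0 < m * Real.exp (m * (x - 1)) + n * (x ^ 2)⁻¹ * Real.exp (n * (x⁻¹ - 1)) := by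
      positivity
    positivity
  · have hf : Tendsto (fun x : ℝ => Real.exp (m * (x - 1))) atTop atTop :=
      Real.tendsto_exp_atTop.comp
        (Tendsto.const_mul_atTop hm (tendsto_atTop_add_const_right _ _ tendsto_id))
    have hg : Tendsto (fun x : ℝ => Real.exp (n * (x⁻¹ - 1))) atTop (𝓝 (Real.exp (n * (0 - 1)))) := by
      exact (Real.continuous_exp.continuousAt.tendsto.comp
        (((tendsto_inv_atTop_zero).sub_const 1).const_mul n))
    have := hf.atTop_add (hg.neg)
    have h2 : Tendsto (fun x : ℝ => Real.exp (m * (x - 1)) - Real.exp (n * (x⁻¹ - 1))) atTop atTop := by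
      simpa [sub_eq_add_neg] using this
    exact h2.atTop_div_const hmn
  · have hf : Tendsto (fun x : ℝ => Real.exp (m * (x - 1))) (𝓝[>] (0:ℝ))
        (𝓝 (Real.exp (m * (0 - 1)))) :=
      ((Real.continuous_exp.continuousAt.tendsto.comp
        ((continuous_const.mul (continuous_id.sub continuous_const)).tendsto 0)).mono_left
        nhdsWithin_le_nhds)
    have hg : Tendsto (fun x : ℝ => Real.exp (n * (x⁻¹ - 1))) (𝓝[>] (0:ℝ)) atTop :=
      Real.tendsto_exp_atTop.comp
        (Tendsto.const_mul_atTop hn (tendsto_atTop_add_const_right _ _ tendsto_inv_nhdsGT_zero))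
    have h2 : Tendsto (fun x : ℝ => Real.exp (m * (x - 1)) - Real.exp (n * (x⁻¹ - 1)))
        (𝓝[>] (0:ℝ)) atBot := by
      simpa [sub_eq_add_neg] using hf.add_atBot (tendsto_neg_atTop_atBot.comp hg)
    exact h2.atBot_div_const hmn
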